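/- Let (R, m) be a Noetherian local domain that is not m-adically complete, and let R̂ denote its m-adic completion. Then Hom_R(R̂, R) = 0. -/

import Mathlib

open CategoryTheory Limits

noncomputable section

open scoped Classical in
/-- Depth of a module over a local ring: the supremum of lengths of regular sequences
contained in the maximal ideal; `⊤` for the zero module. -/
def eDepth (R : Type) [CommRing R] [IsLocalRing R]
    (M : Type) [AddCommGroup M] [Module R M] : ℕ∞ :=
  if Subsingleton M then ⊤
  else sSup {n : ℕ∞ | ∃ rs : List R, (rs.length : ℕ∞) = n ∧
    (∀ r ∈ rs, r ∈ IsLocalRing.maximalIdeal R) ∧ RingTheory.Sequence.IsRegular M rs}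

/-- `M` has projective dimension at most `n`. -/
def projDimLE (R : Type) [CommRing R] (M : Type) [AddCommGroup M] [Module R M] (n : ℕ) : Prop :=
  ∃ P : ProjectiveResolution (ModuleCat.of R M), ∀ i > n, IsZero (P.complex.X i)

/-- The projective dimension of `M`, as an element of `ℕ∞`. -/
def projDim (R : Type) [CommRing R] (M : Type) [AddCommGroup M] [Module R M] : ℕ∞ :=
  sInf {n : ℕ∞ | ∃ m : ℕ, (m : ℕ∞) = n ∧ projDimLE R M m}

/-- `Tor_n^R(M, N)` as an object of `ModuleCat R`. -/
def TorMod (R : Type) [CommRing R] (n : ℕ) (M N : Type) [AddCommGroup M] [Module R M]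
    [AddCommGroup N] [Module R N] : ModuleCat R :=
  ((Tor (ModuleCat R) n).obj (ModuleCat.of R M)).obj (ModuleCat.of R N)

/-- `Ext^n_R(M, N)` as an object of `ModuleCat R`. -/
def ExtMod (R : Type) [CommRing R] (n : ℕ) (M N : Type) [AddCommGroup M] [Module R M]
    [AddCommGroup N] [Module R N] : ModuleCat R :=
  ((Ext R (ModuleCat R) n).obj (Opposite.op (ModuleCat.of R M))).obj (ModuleCat.of R N)

/-- `M` has flat dimension at most `n`: all `Tor_i(M, -)` vanish for `i > n`. -/
def flatDimLE (R : Type) [CommRing R] (M : Type) [AddCommGroup M] [Module R M] (n : ℕ) : Prop :=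
  ∀ (N : Type) (_ : AddCommGroup N) (_ : Module R N), ∀ i > n, IsZero (TorMod R i M N)

/-- The flat dimension of `M`, as an element of `ℕ∞`. -/
def flatDim (R : Type) [CommRing R] (M : Type) [AddCommGroup M] [Module R M] : ℕ∞ :=
  sInf {n : ℕ∞ | ∃ m : ℕ, (m : ℕ∞) = n ∧ flatDimLE R M m}


section Aux

variable {R : Type} [CommRing R] (I : Ideal R)

lemma smul_top_eq_ideal (n : ℕ) : (I ^ n • ⊤ : Submodule R R) = I ^ n := by
  rw [smul_eq_mul, Ideal.mul_top]

/-- If `g` lands in `I^n`, then the completed map lands in `I^n • ⊤`. -/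
lemma map_mem_smul_top (n : ℕ) {r : ℕ} (g : (Fin r → R) →ₗ[R] R)
    (hg : ∀ v, g v ∈ (I ^ n : Ideal R)) (w : AdicCompletion I (Fin r → R)) :
    AdicCompletion.map I g w ∈ (I ^ n • ⊤ : Submodule R (AdicCompletion I R)) := by
  classical
  set a : Fin r → R := fun i => g (fun j => if i = j then 1 else 0) with ha
  have key : AdicCompletion.map I g w
      = ∑ i : Fin r, a i • AdicCompletion.map I (LinearMap.proj i) w := by
    refine AdicCompletion.ext (fun k => ?_)
    obtain ⟨v, hv⟩ := Submodule.Quotient.mk_surjective _ (w.val k)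
    have hsum : (∑ i : Fin r, a i • AdicCompletion.map I (LinearMap.proj i) w).val k
        = ∑ i : Fin r, a i •
          (AdicCompletion.map I (LinearMap.proj (R := R) (φ := fun _ : Fin r => R) i) w).val k := by
      rw [show ∀ (x : AdicCompletion I R) (k : ℕ), x.val k = AdicCompletion.eval I R k x
        from fun _ _ => rfl]
      rw [map_sum]
      rfl
    rw [hsum]
    simp only [AdicCompletion.map_val_apply, ← hv, LinearMap.reduceModIdeal_apply]
    simp only [← Submodule.mkQ_apply, ← map_smul, ← map_sum]
    congr 1
    calc g v = ∑ i : Fin r, (v i) • a i := LinearMap.pi_apply_eq_sum_univ g v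
      _ = ∑ i : Fin r, a i • (LinearMap.proj (R := R) (φ := fun _ : Fin r => R) i) v := by
          simp [smul_eq_mul, mul_comm]
  rw [key]
  exact Submodule.sum_mem _ fun i _ =>
    Submodule.smul_mem_smul (hg _) Submodule.mem_top


/-- Key: an element of the completion whose `n`-th component vanishes lies in `I^n • ⊤`. -/
lemma mem_smul_top_of_eval_eq_zero [IsNoetherianRing R] (n : ℕ) (x : AdicCompletion I R)
    (hx : AdicCompletion.eval I R n x = 0) :
    x ∈ (I ^ n • ⊤ : Submodule R (AdicCompletion I R)) := by
  haveI : IsNoetherian R R := by rwa [← isNoetherianRing_iff]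
  set J : Submodule R R := (I ^ n • ⊤ : Submodule R R) with hJ
  obtain ⟨c, rfl⟩ := AdicCompletion.mk_surjective I R x
  have hc : c n ∈ J := by
    have : Submodule.Quotient.mk (p := J) (c n) = 0 := hx
    exact (Submodule.Quotient.mk_eq_zero J).mp this
  have hmem : ∀ k, c (n + k) ∈ J := by
    intro k
    have h1 := (SModEq.sub_mem).mp (c.property (show n ≤ n + k by omega))
    have := J.sub_mem hc h1
    simpa using this
  -- the shifted sequence, valued in J
  have hcauchy : ∀ {m k : ℕ}, m ≤ k →
      (⟨c (n + m), hmem m⟩ : J) ≡ ⟨c (n + k), hmem k⟩ [SMOD (I ^ m • ⊤ : Submodule R J)] := by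
    intro m k hmk
    rw [SModEq.sub_mem]
    have h1 : c (n + m) - c (n + k) ∈ (I ^ (n + m) • ⊤ : Submodule R R) :=
      (SModEq.sub_mem).mp (c.property (show n + m ≤ n + k by omega))
    have h2 : (I ^ (n + m) • ⊤ : Submodule R R) = I ^ m • J := by
      rw [show n + m = m + n from by omega, pow_add, mul_smul]
    rw [← Submodule.comap_map_eq_of_injective J.injective_subtype (I ^ m • ⊤)]
    simp only [Submodule.mem_comap, Submodule.map_smul'', Submodule.map_top,
      Submodule.range_subtype]
    rw [← h2]
    simpa using h1
  set b : AdicCompletion.AdicCauchySequence I J := ⟨fun k => ⟨c (n + k), hmem k⟩, fun hmk => hcauchy hmk⟩ with hb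
  have hxb : AdicCompletion.mk I R c = AdicCompletion.map I J.subtype (AdicCompletion.mk I J b) := by
    rw [AdicCompletion.map_mk]
    apply eq_of_sub_eq_zero
    rw [← map_sub]
    apply AdicCompletion.mk_zero_of
    refine ⟨0, fun k _ => ⟨k, le_refl k, k, le_refl k, ?_⟩⟩
    have : (c - AdicCompletion.AdicCauchySequence.map I J.subtype b) k = c k - c (n + k) := by
      simp [hb]
      rfl
    rw [this]
    exact (SModEq.sub_mem).mp (c.property (show k ≤ n + k by omega))
  haveI : Module.Finite R J := Module.Finite.iff_fg.mpr (IsNoetherian.noetherian J)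
  obtain ⟨r, π, hπ⟩ := Module.Finite.exists_fin' R J
  obtain ⟨w, hw⟩ := AdicCompletion.map_surjective I hπ (AdicCompletion.mk I J b)
  have : AdicCompletion.mk I R c = AdicCompletion.map I (J.subtype ∘ₗ π) w := by
    rw [← AdicCompletion.map_comp_apply, hw, hxb]
  rw [this]
  refine map_mem_smul_top I n (J.subtype ∘ₗ π) (fun v => ?_) w
  have hv : (J.subtype ∘ₗ π) v ∈ (I ^ n • ⊤ : Submodule R R) := (π v).2
  rwa [smul_top_eq_ideal] at hv

lemma eval_eq_zero_of_mem_smul_top (n : ℕ) (z : AdicCompletion I R)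
    (hz : z ∈ (I ^ n • ⊤ : Submodule R (AdicCompletion I R))) :
    AdicCompletion.eval I R n z = 0 := by
  have h1 : AdicCompletion.eval I R n z ∈
      (I ^ n • ⊤ : Submodule R (R ⧸ (I ^ n • ⊤ : Submodule R R))) := by
    have h2 := Submodule.mem_map_of_mem (f := AdicCompletion.eval I R n) hz
    rw [Submodule.map_smul''] at h2
    exact Submodule.smul_mono le_rfl le_top h2
  have h3 : (I ^ n • ⊤ : Submodule R (R ⧸ (I ^ n • ⊤ : Submodule R R))) = ⊥ := by
    rw [← Submodule.range_mkQ (I ^ n • ⊤ : Submodule R R), ← Submodule.map_top,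
      ← Submodule.map_smul'']
    rw [eq_bot_iff]
    rintro x ⟨y, hy, rfl⟩
    simpa using (Submodule.Quotient.mk_eq_zero _).mpr hy
  rw [h3] at h1
  simpa using h1

/-- The completion is Hausdorff-like: intersection of `I^n • ⊤` is zero. -/
lemma eq_zero_of_forall_mem_smul_top (z : AdicCompletion I R)
    (hz : ∀ n, z ∈ (I ^ n • ⊤ : Submodule R (AdicCompletion I R))) : z = 0 :=
  AdicCompletion.ext fun n => eval_eq_zero_of_mem_smul_top I n z (hz n)

end Aux


open TensorProduct in
/-- If a Noetherian local domain `R` is not complete, then `Hom_R(R̂, R) = 0`. -/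
theorem hom_completion_eq_zero (R : Type) [CommRing R] [IsDomain R] [IsLocalRing R]
    [IsNoetherianRing R]
    (hnc : ¬ Function.Surjective (AdicCompletion.of (IsLocalRing.maximalIdeal R) R)) :
    ∀ f : AdicCompletion (IsLocalRing.maximalIdeal R) R →ₗ[R] R, f = 0 := by
  set I := IsLocalRing.maximalIdeal R with hI
  intro f
  set a : R := f 1 with haa
  have hfI : ∀ (n : ℕ) (z : AdicCompletion I R),
      z ∈ (I ^ n • ⊤ : Submodule R (AdicCompletion I R)) → f z ∈ I ^ n := by
    intro n z hz
    have h2 := Submodule.mem_map_of_mem (f := f) hz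
    rw [Submodule.map_smul''] at h2
    have h3 : f z ∈ (I ^ n • ⊤ : Submodule R R) := Submodule.smul_mono le_rfl le_top h2
    rwa [smul_top_eq_ideal] at h3
  have hof : ∀ r : R, AdicCompletion.of I R r = r • (1 : AdicCompletion I R) := by
    intro r
    rw [show AdicCompletion.of I R r = algebraMap R (AdicCompletion I R) r from rfl,
      Algebra.algebraMap_eq_smul_one]
  have step1 : ∀ x : AdicCompletion I R, AdicCompletion.of I R (f x) = a • x := by
    intro x
    have hmem : ∀ n, AdicCompletion.of I R (f x) - a • x
        ∈ (I ^ n • ⊤ : Submodule R (AdicCompletion I R)) := by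
      intro n
      obtain ⟨r, hr⟩ := Submodule.Quotient.mk_surjective _ (x.val n)
      have h1 : x - AdicCompletion.of I R r
          ∈ (I ^ n • ⊤ : Submodule R (AdicCompletion I R)) := by
        apply mem_smul_top_of_eval_eq_zero
        rw [map_sub, AdicCompletion.eval_of, Submodule.mkQ_apply, hr,
          AdicCompletion.eval_apply, sub_self]
      have hfof : f (AdicCompletion.of I R r) = r * a := by
        rw [hof r, map_smul, ← haa, smul_eq_mul]
      have h2 : f x - r * a ∈ (I ^ n : Ideal R) := by
        have := hfI n _ h1
        rwa [map_sub, hfof] at this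
      have hdecomp : AdicCompletion.of I R (f x) - a • x
          = AdicCompletion.of I R (f x - r * a) + a • (AdicCompletion.of I R r - x) := by
        have hra : AdicCompletion.of I R (r * a) = a • AdicCompletion.of I R r := by
          rw [show r * a = a • r by rw [smul_eq_mul, mul_comm], map_smul]
        rw [map_sub, hra, smul_sub]
        abel
      rw [hdecomp]
      refine Submodule.add_mem _ ?_ ?_
      · have h4 : f x - r * a ∈ (I ^ n • ⊤ : Submodule R R) := by
          rwa [smul_top_eq_ideal]
        have h5 := Submodule.mem_map_of_mem (f := AdicCompletion.of I R) h4
        rw [Submodule.map_smul''] at h5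
        exact Submodule.smul_mono le_rfl le_top h5
      · have h6 : AdicCompletion.of I R r - x = -(x - AdicCompletion.of I R r) := by abel
        rw [h6]
        exact Submodule.smul_mem _ a (Submodule.neg_mem _ h1)
    exact sub_eq_zero.mp (eq_zero_of_forall_mem_smul_top I _ hmem)
  have hH : Function.Injective (AdicCompletion.of I R) := by
    intro y z h
    have hyz : ∀ n : ℕ, y - z ∈ I ^ n := by
      intro n
      have h0 : AdicCompletion.of I R (y - z) = 0 := by rw [map_sub, h, sub_self]
      have h1 : Submodule.Quotient.mk (p := (I ^ n • ⊤ : Submodule R R)) (y - z) = 0 :=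
        congrFun (congrArg Subtype.val h0) n
      have h2 := (Submodule.Quotient.mk_eq_zero _).mp h1
      rwa [smul_top_eq_ideal] at h2
    have hbot : (⨅ n : ℕ, I ^ n) = ⊥ :=
      Ideal.iInf_pow_eq_bot_of_isLocalRing I
        (Ideal.IsMaximal.ne_top (IsLocalRing.maximalIdeal.isMaximal R))
    have hmem : y - z ∈ (⨅ n : ℕ, I ^ n) := Submodule.mem_iInf _ |>.mpr hyz
    rw [hbot] at hmem
    exact sub_eq_zero.mp (by simpa using hmem)
  refine LinearMap.ext fun x => ?_
  by_cases ha : a = 0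
  · 
    have hs := step1 x
    rw [ha, zero_smul] at hs
    have h7 := hH (show AdicCompletion.of I R (f x) = AdicCompletion.of I R 0 by
      rw [hs, map_zero])
    simpa using h7
  · exfalso
    have hRreg : IsSMulRegular R a := fun x y hxy => by
      have : a * x = a * y := by simpa [smul_eq_mul] using hxy
      exact mul_left_cancel₀ ha this
    have hTreg : IsSMulRegular (AdicCompletion I R ⊗[R] R) a :=
      hRreg.lTensor (AdicCompletion I R)
    have hCreg : IsSMulRegular (AdicCompletion I R) a :=
      hTreg.of_injective (TensorProduct.rid R (AdicCompletion I R)).symm.toLinearMap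
        (LinearEquiv.injective _)
    have hfinj : Function.Injective f := by
      intro x y hxy
      apply hCreg
      show a • x = a • y
      rw [← step1 x, ← step1 y, hxy]
    haveI : IsNoetherian R R := by rwa [← isNoetherianRing_iff]
    haveI : Module.Finite R (LinearMap.range f) :=
      Module.Finite.iff_fg.mpr (IsNoetherian.noetherian _)
    haveI : Module.Finite R (AdicCompletion I R) :=
      Module.Finite.equiv (LinearEquiv.ofInjective f hfinj).symm
    have htople : (⊤ : Submodule R (AdicCompletion I R))
        ≤ LinearMap.range (AdicCompletion.of I R) ⊔ I • ⊤ := by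
      intro x _
      obtain ⟨r, hr⟩ := Submodule.Quotient.mk_surjective _ (x.val 1)
      have h1 : x - AdicCompletion.of I R r
          ∈ (I ^ 1 • ⊤ : Submodule R (AdicCompletion I R)) := by
        apply mem_smul_top_of_eval_eq_zero
        rw [map_sub, AdicCompletion.eval_of, Submodule.mkQ_apply, hr,
          AdicCompletion.eval_apply, sub_self]
      rw [pow_one] at h1
      have hx : x = AdicCompletion.of I R r + (x - AdicCompletion.of I R r) := by abel
      rw [hx]
      exact Submodule.add_mem _ (Submodule.mem_sup_left ⟨r, rfl⟩) (Submodule.mem_sup_right h1)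
    have hrange : (⊤ : Submodule R (AdicCompletion I R))
        ≤ LinearMap.range (AdicCompletion.of I R) :=
      Submodule.le_of_le_smul_of_le_jacobson_bot Module.Finite.fg_top
        (IsLocalRing.maximalIdeal_le_jacobson ⊥) htople
    exact hnc fun y => hrange (Submodule.mem_top : y ∈ ⊤)
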